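/- Let z = x + iy with 0 ≤ y ≤ x and set a = √(x² − y²). Then Re(erf(z)) = erf(a) + (2e^{−a²}/√π) ∫_a^x [cos(2t√(t²−a²)) + t·sin(2t√(t²−a²))/√(t²−a²)] dt. -/

import Mathlib

open Complex MeasureTheory

/-- The error function, `erf z = (2/√π) ∫₀^z e^{-u²} du`, integrated along the
segment from `0` to `z` (the integrand is entire, so the path is immaterial). -/
noncomputable def erf (z : ℂ) : ℂ :=
  (2 / Real.sqrt Real.pi : ℝ) * ∫ t in (0:ℝ)..1, z * Complex.exp (-((t : ℂ) * z) ^ 2)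

/-- The complementary error function, `erfc z = (2/√π) ∫_z^∞ e^{-u²} du`,
integrated along the horizontal ray from `z` to `+∞`. -/
noncomputable def erfc (z : ℂ) : ℂ :=
  (2 / Real.sqrt Real.pi : ℝ) * ∫ t in Set.Ioi (0:ℝ), Complex.exp (-(z + (t : ℂ)) ^ 2)

private lemma ftc_t (z : ℂ) (t : ℝ) :
    HasDerivAt (fun t : ℝ => (t : ℂ) * Complex.exp (-((t : ℂ) * z) ^ 2))
      ((1 - 2 * ((t : ℂ) * z) ^ 2) * Complex.exp (-((t : ℂ) * z) ^ 2)) t := by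
  have h1 : HasDerivAt (fun t : ℝ => (t : ℂ)) ((1:ℝ):ℂ) t := (hasDerivAt_id t).ofReal_comp
  have hg : HasDerivAt (fun t : ℝ => (t : ℂ) * z) (((1:ℝ):ℂ) * z) t := h1.mul_const z
  have h2 : HasDerivAt (fun t : ℝ => -((t : ℂ) * z) ^ 2)
      (-(((1:ℝ):ℂ) * z * ((t:ℂ) * z) + ((t:ℂ) * z) * (((1:ℝ):ℂ) * z))) t := by
    exact ((hg.mul hg).neg).congr_of_eventuallyEq (Filter.Eventually.of_forall fun u => by simp [pow_two])
  have := h1.mul h2.cexp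
  refine this.congr_deriv ?_
  push_cast
  ring

private lemma ftc_w (t : ℝ) (w : ℂ) :
    HasDerivAt (fun w : ℂ => w * Complex.exp (-((t : ℂ) * w) ^ 2))
      ((1 - 2 * ((t : ℂ) * w) ^ 2) * Complex.exp (-((t : ℂ) * w) ^ 2)) w := by
  have h1 : HasDerivAt (fun w : ℂ => w) 1 w := hasDerivAt_id w
  have h2 : HasDerivAt (fun w : ℂ => -((t : ℂ) * w) ^ 2) (-(2 * ((t:ℂ)*w) * (t:ℂ))) w := by
    have := (((hasDerivAt_id w).const_mul (t:ℂ)).pow 2).neg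
    refine this.congr_deriv ?_
    simp only [id]
    ring
  have := h1.mul h2.cexp
  refine this.congr_deriv ?_
  ring

private lemma cexp_norm_le (c : ℂ) : ‖Complex.exp c‖ ≤ Real.exp ‖c‖ := by
  rw [Complex.norm_exp]
  exact Real.exp_le_exp.2 ((le_abs_self _).trans (Complex.abs_re_le_norm c))

private lemma hasDerivAt_core (z : ℂ) :
    HasDerivAt (fun z : ℂ => ∫ t in (0:ℝ)..1, z * Complex.exp (-((t : ℂ) * z) ^ 2))
      (Complex.exp (-z ^ 2)) z := by
  set R : ℝ := ‖z‖ + 1 with hRdef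
  have hcont : ∀ w : ℂ, Continuous fun t : ℝ => w * Complex.exp (-((t : ℂ) * w) ^ 2) := by
    intro w; fun_prop
  have key := intervalIntegral.hasDerivAt_integral_of_dominated_loc_of_deriv_le
    (𝕜 := ℂ) (μ := volume) (a := 0) (b := 1)
    (F := fun (w : ℂ) (t : ℝ) => w * Complex.exp (-((t : ℂ) * w) ^ 2))
    (F' := fun (w : ℂ) (t : ℝ) => (1 - 2 * ((t : ℂ) * w) ^ 2) * Complex.exp (-((t : ℂ) * w) ^ 2))
    (x₀ := z) (bound := fun _ => (1 + 2 * R ^ 2) * Real.exp (R ^ 2)) (s := Metric.ball z 1) (Metric.ball_mem_nhds z one_pos)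
    ?_ ?_ ?_ ?_ ?_ ?_
  · obtain ⟨-, hd⟩ := key
    refine hd.congr_deriv ?_
    rw [intervalIntegral.integral_eq_sub_of_hasDerivAt (fun t _ => ftc_t z t)]
    · norm_num
    · apply Continuous.intervalIntegrable; fun_prop
  · filter_upwards with w using ((hcont w).aestronglyMeasurable).restrict
  · exact (hcont z).intervalIntegrable 0 1
  · exact (Continuous.aestronglyMeasurable (by fun_prop)).restrict
  · filter_upwards with t ht w hw
    have ht' : t ∈ Set.Ioc (0:ℝ) 1 := by rwa [Set.uIoc_of_le zero_le_one] at ht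
    have hwR : ‖w‖ ≤ R := by
      have h1 : ‖w - z‖ < 1 := mem_ball_iff_norm.1 hw
      calc ‖w‖ = ‖z + (w - z)‖ := by ring_nf
        _ ≤ ‖z‖ + ‖w - z‖ := norm_add_le _ _
        _ ≤ ‖z‖ + 1 := by linarith
    have htw : ‖(t:ℂ) * w‖ ≤ R := by
      rw [norm_mul, Complex.norm_real]
      have h1 : |t| ≤ 1 := by rw [abs_le]; exact ⟨by linarith [ht'.1], ht'.2⟩
      calc |t| * ‖w‖ ≤ 1 * R := mul_le_mul h1 hwR (norm_nonneg _) zero_le_one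
        _ = R := one_mul R
    have hsq : ‖(t:ℂ)*w‖ ^ 2 ≤ R ^ 2 := pow_le_pow_left₀ (norm_nonneg _) htw 2
    calc ‖(1 - 2 * ((t : ℂ) * w) ^ 2) * Complex.exp (-((t : ℂ) * w) ^ 2)‖
        = ‖1 - 2 * ((t : ℂ) * w) ^ 2‖ * ‖Complex.exp (-((t : ℂ) * w) ^ 2)‖ := norm_mul _ _
      _ ≤ (1 + 2 * R ^ 2) * Real.exp (R ^ 2) := by
          apply mul_le_mul ?_ ?_ (norm_nonneg _) (by positivity)
          · calc ‖1 - 2 * ((t : ℂ) * w) ^ 2‖ ≤ ‖(1:ℂ)‖ + ‖2 * ((t:ℂ)*w)^2‖ := norm_sub_le _ _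
              _ ≤ 1 + 2 * R ^ 2 := by
                  rw [norm_one, norm_mul, norm_pow]
                  have h2 : ‖(2:ℂ)‖ = 2 := by norm_num
                  rw [h2]
                  linarith
          · calc ‖Complex.exp (-((t : ℂ) * w) ^ 2)‖ ≤ Real.exp ‖-((t : ℂ) * w) ^ 2‖ :=
                  cexp_norm_le _
              _ ≤ Real.exp (R ^ 2) := by
                  apply Real.exp_le_exp.2
                  rw [norm_neg, norm_pow]
                  exact hsq
  · exact intervalIntegrable_const
  · filter_upwards with t ht w hw using ftc_w t w

private lemma hasDerivAt_erf (z : ℂ) :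
    HasDerivAt erf (((2 / Real.sqrt Real.pi : ℝ) : ℂ) * Complex.exp (-z ^ 2)) z :=
  (hasDerivAt_core z).const_mul _

private lemma continuous_erf : Continuous erf :=
  continuous_iff_continuousAt.2 fun z => (hasDerivAt_erf z).continuousAt

theorem re_erf_eq (x y : ℝ) (hy : 0 ≤ y) (hyx : y ≤ x) (a : ℝ)
    (ha : a = Real.sqrt (x ^ 2 - y ^ 2)) :
    (erf (x + y * Complex.I)).re =
      (erf (a : ℂ)).re +
        (2 * Real.exp (-a ^ 2) / Real.sqrt Real.pi) *
          ∫ t in a..x, (Real.cos (2 * t * Real.sqrt (t ^ 2 - a ^ 2)) +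
            t * Real.sin (2 * t * Real.sqrt (t ^ 2 - a ^ 2)) / Real.sqrt (t ^ 2 - a ^ 2)) := by
  have hx : 0 ≤ x := hy.trans hyx
  have hy2x2 : y ^ 2 ≤ x ^ 2 := by nlinarith
  have ha0 : 0 ≤ a := ha ▸ Real.sqrt_nonneg _
  have ha2 : a ^ 2 = x ^ 2 - y ^ 2 := by
    rw [ha]; exact Real.sq_sqrt (by linarith)
  have hax : a ≤ x := by nlinarith
  set c : ℝ := 2 / Real.sqrt Real.pi with hc
  set s : ℝ → ℝ := fun t => Real.sqrt (t ^ 2 - a ^ 2) with hs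
  set γ : ℝ → ℂ := fun t => (t : ℂ) + (s t : ℂ) * Complex.I with hγ
  set h : ℝ → ℝ := fun t => (erf (γ t)).re with hh
  set G : ℝ → ℝ := fun t => c * Real.exp (-a ^ 2) *
    (Real.cos (2 * t * s t) + t * Real.sin (2 * t * s t) / s t) with hG
  have hscont : Continuous s := by fun_prop
  have hγcont : Continuous γ := by fun_prop
  have hhcont : ContinuousOn h (Set.Icc a x) :=
    (Complex.continuous_re.comp (continuous_erf.comp hγcont)).continuousOn
  -- derivative on the open interval
  have hderiv : ∀ t ∈ Set.Ioo a x, HasDerivAt h (G t) t := by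
    intro t ht
    have hta : a < t := ht.1
    have ht0 : 0 < t := lt_of_le_of_lt ha0 hta
    have hpos : 0 < t ^ 2 - a ^ 2 := by nlinarith
    have hspos : 0 < s t := Real.sqrt_pos.2 hpos
    have hst : s t ^ 2 = t ^ 2 - a ^ 2 := Real.sq_sqrt hpos.le
    have hs' : HasDerivAt s (t / s t) t := by
      have hu : HasDerivAt (fun t : ℝ => t ^ 2 - a ^ 2) (2 * t) t := by
        simpa using (hasDerivAt_pow 2 t).sub_const (a ^ 2)
      have := (Real.hasDerivAt_sqrt hpos.ne').comp t hu
      refine this.congr_deriv ?_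
      rw [hs]
      field_simp
    have hγ' : HasDerivAt γ (1 + ((t / s t : ℝ) : ℂ) * Complex.I) t := by
      have h1 : HasDerivAt (fun t : ℝ => (t : ℂ)) ((1:ℝ):ℂ) t := (hasDerivAt_id t).ofReal_comp
      have h2 := (hs'.ofReal_comp).mul_const Complex.I
      have := h1.add h2
      exact this.congr_deriv (by simp)
    have hcomp := HasDerivAt.scomp (𝕜 := ℝ) (𝕜' := ℂ) t (hasDerivAt_erf (γ t)) hγ'
    have hre : HasDerivAt h
        (((1 + ((t / s t : ℝ) : ℂ) * Complex.I) *
          (((c : ℝ) : ℂ) * Complex.exp (-(γ t) ^ 2))).re) t := by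
      have := Complex.reCLM.hasFDerivAt.comp_hasDerivAt t hcomp
      simpa [Function.comp_def, smul_eq_mul, hh, hc] using this
    convert hre using 1
    have hre2 : (-(γ t) ^ 2).re = -a ^ 2 := by
      simp only [hγ, pow_two, Complex.neg_re, Complex.mul_re, Complex.add_re, Complex.add_im,
        Complex.mul_im, Complex.ofReal_re, Complex.ofReal_im, Complex.I_re, Complex.I_im]
      nlinarith [hst]
    have him2 : (-(γ t) ^ 2).im = -(2 * t * s t) := by
      simp only [hγ, pow_two, Complex.neg_im, Complex.mul_re, Complex.add_re, Complex.add_im,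
        Complex.mul_im, Complex.ofReal_re, Complex.ofReal_im, Complex.I_re, Complex.I_im]
      ring
    rw [hG]
    simp only [Complex.mul_re, Complex.add_re, Complex.add_im, Complex.one_re, Complex.one_im,
      Complex.mul_im, Complex.ofReal_re, Complex.ofReal_im, Complex.I_re, Complex.I_im,
      Complex.exp_re, Complex.exp_im, hre2, him2]
    rw [Real.cos_neg, Real.sin_neg]
    field_simp
    ring
  -- interval integrability of G
  have hGint : IntervalIntegrable G volume a x := by
    rw [intervalIntegrable_iff_integrableOn_Ioc_of_le hax]
    have hmeas : AEStronglyMeasurable G volume := by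
      apply Measurable.aestronglyMeasurable
      apply Measurable.const_mul
      apply Measurable.add
      · fun_prop
      · exact ((measurable_id.mul (by fun_prop : Measurable fun t => Real.sin (2 * t * s t))).div
          hscont.measurable)
    apply Measure.integrableOn_of_bounded (M := |c * Real.exp (-a ^ 2)| * (1 + 2 * x ^ 2))
      measure_Ioc_lt_top.ne hmeas
    filter_upwards [ae_restrict_mem measurableSet_Ioc] with t ht
    have hta : a < t := ht.1
    have htx : t ≤ x := ht.2
    have ht0 : 0 < t := lt_of_le_of_lt ha0 hta
    have hpos : 0 < t ^ 2 - a ^ 2 := by nlinarith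
    have hspos : 0 < s t := Real.sqrt_pos.2 hpos
    have hb1 : |Real.cos (2 * t * s t)| ≤ 1 := Real.abs_cos_le_one _
    have hb2 : |t * Real.sin (2 * t * s t) / s t| ≤ 2 * t ^ 2 := by
      rw [abs_div, abs_of_pos hspos, div_le_iff₀ hspos, abs_mul, abs_of_pos ht0]
      have hsin : |Real.sin (2 * t * s t)| ≤ 2 * t * s t := by
        have h1 : |Real.sin (2 * t * s t)| ≤ |2 * t * s t| := Real.abs_sin_le_abs
        rwa [_root_.abs_of_nonneg (show (0:ℝ) ≤ 2 * t * s t by positivity)] at h1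
      calc t * |Real.sin (2 * t * s t)| ≤ t * (2 * t * s t) := by
            exact mul_le_mul_of_nonneg_left hsin ht0.le
        _ = 2 * t ^ 2 * s t := by ring
    have ht2 : t ^ 2 ≤ x ^ 2 := by nlinarith
    rw [hG]
    rw [Real.norm_eq_abs, abs_mul]
    apply mul_le_mul_of_nonneg_left _ (abs_nonneg _)
    calc |Real.cos (2 * t * s t) + t * Real.sin (2 * t * s t) / s t|
        ≤ |Real.cos (2 * t * s t)| + |t * Real.sin (2 * t * s t) / s t| := abs_add_le _ _
      _ ≤ 1 + 2 * x ^ 2 := by linarith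
  -- fundamental theorem of calculus
  have key := intervalIntegral.integral_eq_sub_of_hasDeriv_right_of_le hax hhcont
    (fun t ht => (hderiv t ht).hasDerivWithinAt) hGint
  have hsx : s x = y := by
    rw [hs]; simp only
    rw [show x ^ 2 - a ^ 2 = y ^ 2 by linarith]
    exact Real.sqrt_sq hy
  have hhx : h x = (erf (x + y * Complex.I)).re := by
    simp only [hh, hγ, hsx]
  have hha : h a = (erf (a : ℂ)).re := by
    have hsa : s a = 0 := by rw [hs]; simp
    simp only [hh, hγ, hsa]
    norm_num
  rw [hhx, hha] at key
  have h2 : (2 * Real.exp (-a ^ 2) / Real.sqrt Real.pi) *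
      (∫ t in a..x, (Real.cos (2 * t * s t) + t * Real.sin (2 * t * s t) / s t)) =
      ∫ t in a..x, G t := by
    rw [hG]
    rw [intervalIntegral.integral_const_mul]
    rw [hc]
    ring
  rw [h2, key]
  ring
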